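/- Let 1 < q < 2, let X be a compact subset of ℂ, let x₀ ∈ ℂ, and let k : ℂ → ℂ vanish off X and belong to L^q(X, dA). For each positive integer n let Δ_n = {x ∈ ℂ : |x − x₀| < 1/n}. Then (1/m(Δ_n)) ∫_{Δ_n} [ ∫_X |x − x₀|^q |k(z)|^q / |z − x|^q dm_z ] dm_x → 0 as n → ∞. -/

import Mathlib

open MeasureTheory Metric Filter Set
open scoped ENNReal

noncomputable section

namespace AvgDblAux




/-- Finiteness of the integral of `‖w‖^(-q)` over a closed ball in `ℂ`, for `0 < q < 2`. -/
lemma finite_rpow_neg_integral {q : ℝ} (hq0 : 0 < q) (hq2 : q < 2) (T : ℝ) :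
    ∫⁻ w : ℂ in closedBall 0 T, ENNReal.ofReal (‖w‖ ^ (-q)) < ∞ := by
  set μ := (volume : Measure ℂ).restrict (closedBall (0:ℂ) T) with hμ
  have h_meas : Measurable fun w : ℂ => ‖w‖ ^ (-q) := by fun_prop
  have h_nonneg : ∀ w : ℂ, 0 ≤ ‖w‖ ^ (-q) := fun w => Real.rpow_nonneg (norm_nonneg _) _
  have hlc := lintegral_eq_lintegral_meas_le μ (Eventually.of_forall h_nonneg)
    h_meas.aemeasurable
  rw [show ∫⁻ w : ℂ in closedBall 0 T, ENNReal.ofReal (‖w‖ ^ (-q)) =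
      ∫⁻ w, ENNReal.ofReal (‖w‖ ^ (-q)) ∂μ from rfl, hlc]
  have hsub : ∀ t : ℝ, 0 < t → {a : ℂ | t ≤ ‖a‖ ^ (-q)} ⊆ closedBall 0 (t ^ (-q⁻¹)) := by
    intro t ht a ha
    simp only [mem_setOf_eq] at ha
    have ha0 : a ≠ 0 := by
      rintro rfl
      rw [norm_zero, Real.zero_rpow (by simpa using hq0.ne')] at ha
      linarith
    have hna : 0 < ‖a‖ := norm_pos_iff.2 ha0
    have hle := Real.rpow_le_rpow_of_nonpos ht ha (by simp [inv_nonneg, hq0.le] : -q⁻¹ ≤ 0)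
    rw [← Real.rpow_mul hna.le, neg_mul_neg, mul_inv_cancel₀ hq0.ne', Real.rpow_one] at hle
    simpa [mem_closedBall_zero_iff] using hle
  calc ∫⁻ t in Ioi (0:ℝ), μ {a : ℂ | t ≤ ‖a‖ ^ (-q)}
      ≤ ∫⁻ t in Ioc (0:ℝ) 1 ∪ Ioi 1, μ {a : ℂ | t ≤ ‖a‖ ^ (-q)} :=
        lintegral_mono_set Ioi_subset_Ioc_union_Ioi
    _ ≤ (∫⁻ t in Ioc (0:ℝ) 1, μ {a : ℂ | t ≤ ‖a‖ ^ (-q)}) +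
        ∫⁻ t in Ioi (1:ℝ), μ {a : ℂ | t ≤ ‖a‖ ^ (-q)} := lintegral_union_le _ _ _
    _ < ∞ := by
        refine ENNReal.add_lt_top.2 ⟨?_, ?_⟩
        · calc (∫⁻ t in Ioc (0:ℝ) 1, μ {a : ℂ | t ≤ ‖a‖ ^ (-q)})
              ≤ ∫⁻ _t in Ioc (0:ℝ) 1, volume (closedBall (0:ℂ) T) := by
                refine setLIntegral_mono' measurableSet_Ioc fun t _ => ?_
                calc μ {a : ℂ | t ≤ ‖a‖ ^ (-q)} ≤ μ univ := measure_mono (subset_univ _)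
                  _ = volume (closedBall (0:ℂ) T) := by
                      rw [hμ, Measure.restrict_apply_univ]
            _ = volume (closedBall (0:ℂ) T) * volume (Ioc (0:ℝ) 1) := by
                rw [setLIntegral_const]
            _ < ∞ := ENNReal.mul_lt_top measure_closedBall_lt_top
                (by simp [Real.volume_Ioc])
        · have hkey : ∀ t ∈ Ioi (1:ℝ), μ {a : ℂ | t ≤ ‖a‖ ^ (-q)} ≤
              ENNReal.ofReal (t ^ (-(2 * q⁻¹))) * volume (ball (0:ℂ) 1) := by
            intro t ht
            have ht0 : (0:ℝ) < t := lt_trans one_pos ht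
            calc μ {a : ℂ | t ≤ ‖a‖ ^ (-q)}
                ≤ volume {a : ℂ | t ≤ ‖a‖ ^ (-q)} := Measure.restrict_apply_le _ _
              _ ≤ volume (closedBall (0:ℂ) (t ^ (-q⁻¹))) := measure_mono (hsub t ht0)
              _ = ENNReal.ofReal ((t ^ (-q⁻¹)) ^ Module.finrank ℝ ℂ) * volume (ball (0:ℂ) 1) :=
                  Measure.addHaar_closedBall _ _ (Real.rpow_nonneg ht0.le _)
              _ = ENNReal.ofReal (t ^ (-(2 * q⁻¹))) * volume (ball (0:ℂ) 1) := by
                  rw [Complex.finrank_real_complex]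
                  congr 1
                  rw [← Real.rpow_natCast (t ^ (-q⁻¹)) 2, ← Real.rpow_mul ht0.le]
                  norm_num
                  ring_nf
          calc (∫⁻ t in Ioi (1:ℝ), μ {a : ℂ | t ≤ ‖a‖ ^ (-q)})
              ≤ ∫⁻ t in Ioi (1:ℝ),
                  ENNReal.ofReal (t ^ (-(2 * q⁻¹))) * volume (ball (0:ℂ) 1) :=
                setLIntegral_mono' measurableSet_Ioi hkey
            _ = (∫⁻ t in Ioi (1:ℝ), ENNReal.ofReal (t ^ (-(2 * q⁻¹)))) *
                  volume (ball (0:ℂ) 1) :=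
                lintegral_mul_const _ (by fun_prop)
            _ < ∞ := by
                refine ENNReal.mul_lt_top ?_ measure_ball_lt_top
                refine IntegrableOn.setLIntegral_lt_top ?_
                refine integrableOn_Ioi_rpow_of_lt ?_ one_pos
                have h1 : (1:ℝ) < 2 / q := (one_lt_div hq0).2 hq2
                rw [div_eq_mul_inv] at h1
                linarith





lemma lint_translate (g : ℂ → ℝ≥0∞) (x : ℂ) (s : Set ℂ) :
    ∫⁻ z in ((· + x) '' s), g (z - x) = ∫⁻ w in s, g w := by
  have h := (measurePreserving_add_right (volume : Measure ℂ) x).setLIntegral_comp_emb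
    (MeasurableEquiv.addRight x).measurableEmbedding (fun z => g (z - x)) s
  simpa [add_sub_cancel_right] using h.symm

lemma image_add_closedBall (x : ℂ) (T : ℝ) :
    ((· + x) '' closedBall (0:ℂ) T) = closedBall x T := by
  ext w
  simp only [mem_image, mem_closedBall_zero_iff, mem_closedBall, dist_eq_norm]
  constructor
  · rintro ⟨a, ha, rfl⟩; simpa using ha
  · intro hw; exact ⟨w - x, by simpa using hw, by ring⟩

lemma image_add_ball (x : ℂ) (T : ℝ) :
    ((· + x) '' ball (0:ℂ) T) = ball x T := by
  ext w
  simp only [mem_image, mem_ball_zero_iff, mem_ball, dist_eq_norm]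
  constructor
  · rintro ⟨a, ha, rfl⟩; simpa using ha
  · intro hw; exact ⟨w - x, by simpa using hw, by ring⟩

lemma lint_translate_closedBall (g : ℂ → ℝ≥0∞) (x : ℂ) (T : ℝ) :
    ∫⁻ z in closedBall x T, g (z - x) = ∫⁻ w in closedBall (0:ℂ) T, g w := by
  rw [← image_add_closedBall x T, lint_translate]

lemma lint_translate_ball (g : ℂ → ℝ≥0∞) (x : ℂ) (T : ℝ) :
    ∫⁻ z in ball x T, g (z - x) = ∫⁻ w in ball (0:ℂ) T, g w := by
  rw [← image_add_ball x T, lint_translate]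

lemma lint_smul (g : ℂ → ℝ≥0∞) (hg : Measurable g) {r : ℝ} (hr : 0 < r) :
    ∫⁻ w, g w = ENNReal.ofReal (r ^ 2) * ∫⁻ u, g (r • u) := by
  have hmap := Measure.map_addHaar_smul (volume : Measure ℂ) (r := r) hr.ne'
  rw [Complex.finrank_real_complex] at hmap
  have h1 : ∫⁻ u, g (r • u) = ∫⁻ w, g w ∂(Measure.map (r • ·) (volume : Measure ℂ)) :=
    (lintegral_map hg (measurable_const_smul r)).symm
  rw [h1, hmap, lintegral_smul_measure, smul_eq_mul, ← mul_assoc, ← ENNReal.ofReal_mul (by positivity),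
    abs_of_pos (by positivity), mul_inv_cancel₀ (by positivity), ENNReal.ofReal_one, one_mul]

lemma lint_ball_scale {q : ℝ} (hq0 : 0 < q) {r : ℝ} (hr : 0 < r) :
    ∫⁻ w in ball (0:ℂ) r, ENNReal.ofReal (‖w‖ ^ (-q)) =
      ENNReal.ofReal (r ^ (2 - q)) * ∫⁻ u in ball (0:ℂ) 1, ENNReal.ofReal (‖u‖ ^ (-q)) := by
  have hmeas : Measurable fun w : ℂ => ENNReal.ofReal (‖w‖ ^ (-q)) := by fun_prop
  have hind : Measurable ((ball (0:ℂ) r).indicator fun w => ENNReal.ofReal (‖w‖ ^ (-q))) :=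
    hmeas.indicator measurableSet_ball
  rw [← lintegral_indicator measurableSet_ball _, lint_smul _ hind hr]
  have hcomp : ∀ u : ℂ, ((ball (0:ℂ) r).indicator fun w => ENNReal.ofReal (‖w‖ ^ (-q))) (r • u)
      = (ball (0:ℂ) 1).indicator
          (fun u => ENNReal.ofReal (r ^ (-q)) * ENNReal.ofReal (‖u‖ ^ (-q))) u := by
    intro u
    have hmem : r • u ∈ ball (0:ℂ) r ↔ u ∈ ball (0:ℂ) 1 := by
      simp only [mem_ball_zero_iff, norm_smul, Real.norm_eq_abs, abs_of_pos hr]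
      constructor
      · intro h; nlinarith [norm_nonneg u]
      · intro h; nlinarith [norm_nonneg u]
    by_cases hu : u ∈ ball (0:ℂ) 1
    · rw [indicator_of_mem hu, indicator_of_mem (hmem.2 hu)]
      rw [norm_smul, Real.norm_eq_abs, abs_of_pos hr, Real.mul_rpow hr.le (norm_nonneg u),
        ENNReal.ofReal_mul (Real.rpow_nonneg hr.le _)]
    · rw [indicator_of_notMem hu, indicator_of_notMem (fun h => hu (hmem.1 h))]
  simp only [hcomp]
  rw [lintegral_indicator measurableSet_ball _, lintegral_const_mul _ (by fun_prop),
    ← mul_assoc, ← ENNReal.ofReal_mul (by positivity)]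
  congr 2
  rw [← Real.rpow_two, ← Real.rpow_add hr, sub_eq_add_neg]





lemma tendsto_tail (g : ℂ → ℝ≥0∞) (hg : Measurable g) (μ : Measure ℂ)
    (hfin : ∫⁻ z, g z ∂μ ≠ ∞) :
    Tendsto (fun j : ℕ => ∫⁻ z, Set.indicator {z | (j:ℝ≥0∞) < g z} g z ∂μ)
      atTop (nhds 0) := by
  have h := tendsto_lintegral_of_dominated_convergence (μ := μ)
    (F := fun j : ℕ => Set.indicator {z | (j:ℝ≥0∞) < g z} g) (f := fun _ => 0) (bound := g)
    (fun j => hg.indicator (measurableSet_lt measurable_const hg))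
    (fun j => Eventually.of_forall fun z => Set.indicator_le_self _ _ z)
    hfin ?_
  · simpa using h
  · filter_upwards [ae_lt_top hg hfin] with z hz
    obtain ⟨j₀, hj₀⟩ := ENNReal.exists_nat_gt hz.ne
    refine tendsto_nhds_of_eventually_eq (eventually_atTop.2 ⟨j₀, fun j hj => ?_⟩)
    have hle : g z ≤ (j:ℝ≥0∞) := le_of_lt (lt_of_lt_of_le hj₀ (Nat.cast_le.2 hj))
    exact Set.indicator_of_notMem (by simpa using not_lt.2 hle) _


end AvgDblAux

open MeasureTheory Metric Filter

/-- For `1 < q < 2` and `k ∈ L^q(X, dA)` vanishing off the compact set `X`, the averages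
over the disks `Δ_n = B(x₀, 1/n)` of `∫_X |x-x₀|^q |k(z)|^q / |z-x|^q dm_z` tend to `0`
as `n → ∞`. -/
theorem averaged_double_integral_tendsto_zero
    (q : ℝ) (hq1 : 1 < q) (hq2 : q < 2) (X : Set ℂ) (hX : IsCompact X)
    (x₀ : ℂ) (k : ℂ → ℂ) (hk0 : ∀ z ∉ X, k z = 0)
    (hkLq : MemLp k (ENNReal.ofReal q) (volume.restrict X)) :
    Tendsto (fun n : ℕ =>
        (volume (ball x₀ (1 / (n : ℝ)))).toReal⁻¹ *
          ∫ x in ball x₀ (1 / (n : ℝ)),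
            (∫ z in X, ‖x - x₀‖ ^ q * ‖k z‖ ^ q / ‖z - x‖ ^ q))
      atTop (nhds 0) := by
  have hq0 : 0 < q := by linarith
  -- measurable representative of `k`
  set k' : ℂ → ℂ := hkLq.aestronglyMeasurable.mk k with hk'def
  have hk'm : Measurable k' := hkLq.aestronglyMeasurable.stronglyMeasurable_mk.measurable
  have hkk' : k =ᵐ[volume.restrict X] k' := hkLq.aestronglyMeasurable.ae_eq_mk
  set g : ℂ → ℝ≥0∞ := fun z => ENNReal.ofReal (‖k' z‖ ^ q) with hgdef
  have hgm : Measurable g := by fun_prop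
  have hgfin : (∫⁻ z in X, g z) ≠ ∞ := by
    have hint : Integrable (fun z => ‖k z‖ ^ q) (volume.restrict X) := by
      have h := hkLq.integrable_norm_rpow (by simp only [ne_eq, ENNReal.ofReal_eq_zero, not_le]; linarith) ENNReal.ofReal_ne_top
      rwa [ENNReal.toReal_ofReal hq0.le] at h
    have h1 : (fun z => ENNReal.ofReal (‖k z‖ ^ q)) =ᵐ[volume.restrict X] g :=
      hkk'.mono fun z hz => by simp only [hgdef]; rw [hz]
    rw [← lintegral_congr_ae h1]
    have h2 := hint.2
    rw [hasFiniteIntegral_iff_ofReal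
      (Eventually.of_forall fun z => by positivity)] at h2
    exact h2.ne
  set Φ : ℂ → ℂ → ℝ≥0∞ :=
    fun x z => ENNReal.ofReal (‖x - x₀‖ ^ q * ‖k' z‖ ^ q / ‖z - x‖ ^ q) with hΦdef
  have hΦm : Measurable (Function.uncurry Φ) := by
    apply Measurable.ennreal_ofReal; fun_prop
  set L : ℂ → ℝ≥0∞ := fun x => ∫⁻ z in X, Φ x z with hLdef
  have hLm : Measurable L := hΦm.lintegral_prod_right'
  have hinner : ∀ x : ℂ,
      (∫ z in X, ‖x - x₀‖ ^ q * ‖k z‖ ^ q / ‖z - x‖ ^ q) = (L x).toReal := by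
    intro x
    have h1 : (∫ z in X, ‖x - x₀‖ ^ q * ‖k z‖ ^ q / ‖z - x‖ ^ q)
        = ∫ z in X, ‖x - x₀‖ ^ q * ‖k' z‖ ^ q / ‖z - x‖ ^ q :=
      integral_congr_ae (hkk'.mono fun z hz => by dsimp only; rw [hz])
    rw [h1, integral_eq_lintegral_of_nonneg_ae
      (Eventually.of_forall fun z => by positivity)
      (Measurable.aestronglyMeasurable (by fun_prop))]
  simp only [hinner]
  -- constants
  obtain ⟨R, hR⟩ : ∃ R, X ⊆ closedBall x₀ R := hX.isBounded.subset_closedBall x₀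
  set T : ℝ := R + 1 with hTdef
  set C₁ : ℝ≥0∞ := ∫⁻ w in closedBall (0:ℂ) T, ENNReal.ofReal (‖w‖ ^ (-q)) with hC₁def
  have hC₁ : C₁ ≠ ∞ := (AvgDblAux.finite_rpow_neg_integral hq0 hq2 T).ne
  set C₀ : ℝ≥0∞ := ∫⁻ u in ball (0:ℂ) 1, ENNReal.ofReal (‖u‖ ^ (-q)) with hC₀def
  have hC₀ : C₀ ≠ ∞ :=
    ((lintegral_mono_set ball_subset_closedBall).trans_lt
      (AvgDblAux.finite_rpow_neg_integral hq0 hq2 1)).ne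
  set Bvol : ℝ≥0∞ := volume (ball (0:ℂ) 1) with hBvoldef
  have hB0 : Bvol ≠ 0 := (measure_ball_pos _ _ one_pos).ne'
  have hBtop : Bvol ≠ ∞ := measure_ball_lt_top.ne
  have hBtR : 0 < Bvol.toReal := ENNReal.toReal_pos hB0 hBtop
  set D : ℝ≥0∞ := ENNReal.ofReal (2 ^ (2 - q)) * C₀ + Bvol with hDdef
  have hD : D ≠ ∞ := by
    rw [hDdef]
    exact ENNReal.add_ne_top.2 ⟨ENNReal.mul_ne_top ENNReal.ofReal_ne_top hC₀, hBtop⟩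
  have hE1 : ∀ x ∈ ball x₀ 1, (∫⁻ z in X, ENNReal.ofReal (‖z - x‖ ^ (-q))) ≤ C₁ := by
    intro x hx
    have hXsub : X ⊆ closedBall x T := by
      intro z hz
      rw [mem_closedBall]
      calc dist z x ≤ dist z x₀ + dist x₀ x := dist_triangle _ _ _
        _ ≤ R + 1 := add_le_add (hR hz) (by rw [dist_comm]; exact (mem_ball.1 hx).le)
    calc (∫⁻ z in X, ENNReal.ofReal (‖z - x‖ ^ (-q)))
        ≤ ∫⁻ z in closedBall x T, ENNReal.ofReal (‖z - x‖ ^ (-q)) :=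
          lintegral_mono_set hXsub
      _ = C₁ := AvgDblAux.lint_translate_closedBall
          (fun w => ENNReal.ofReal (‖w‖ ^ (-q))) x T
  -- tail integrals
  set t : ℕ → ℝ≥0∞ :=
    fun j => ∫⁻ z in X, Set.indicator {z | (j:ℝ≥0∞) < g z} g z with htdef
  have htt : Tendsto t atTop (nhds 0) := AvgDblAux.tendsto_tail g hgm _ hgfin
  have htfin : ∀ j, t j ≠ ∞ := fun j =>
    ((lintegral_mono fun z => Set.indicator_le_self _ _ z).trans_lt hgfin.lt_top).ne
  rw [Metric.tendsto_atTop]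
  intro ε hε
  have hDt : Tendsto (fun j => D * t j) atTop (nhds 0) := by
    simpa using ENNReal.Tendsto.const_mul htt (Or.inr hD)
  have hεB : (0:ℝ≥0∞) < ENNReal.ofReal (ε/2) * Bvol :=
    ENNReal.mul_pos (ENNReal.ofReal_pos.2 (half_pos hε)).ne' hB0
  obtain ⟨j, hj⟩ := (hDt.eventually_lt_const hεB).exists
  have hr_tend : Tendsto (fun n : ℕ => ENNReal.ofReal ((1/(n:ℝ)) ^ q) * ((j:ℝ≥0∞) * C₁))
      atTop (nhds 0) := by
    have h2 : Tendsto (fun n : ℕ => 1/(n:ℝ)) atTop (nhds 0) :=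
      tendsto_one_div_atTop_nhds_zero_nat
    have h3 : ContinuousAt (fun x : ℝ => x ^ q) 0 :=
      Real.continuousAt_rpow_const 0 q (Or.inr hq0.le)
    have h1 : Tendsto (fun n : ℕ => (1/(n:ℝ)) ^ q) atTop (nhds 0) := by
      have := h3.tendsto.comp h2
      simpa [Function.comp_def, Real.zero_rpow hq0.ne'] using this
    have h4 : Tendsto (fun n : ℕ => ENNReal.ofReal ((1/(n:ℝ)) ^ q)) atTop (nhds 0) := by
      simpa using ENNReal.tendsto_ofReal h1
    simpa using ENNReal.Tendsto.mul_const h4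
      (Or.inr (ENNReal.mul_ne_top (ENNReal.natCast_ne_top j) hC₁))
  obtain ⟨N, hN⟩ := eventually_atTop.1
    (hr_tend.eventually_lt_const (ENNReal.ofReal_pos.2 (half_pos hε)))
  refine ⟨max N 1, fun n hn => ?_⟩
  have hnN : N ≤ n := le_trans (le_max_left _ _) hn
  have hn1 : 1 ≤ n := le_trans (le_max_right _ _) hn
  have hnpos : (0:ℝ) < n := by exact_mod_cast hn1
  set r : ℝ := 1/(n:ℝ) with hrdef
  have hr0 : 0 < r := by positivity
  have hr1 : r ≤ 1 := by rw [hrdef, div_le_one hnpos]; exact_mod_cast hn1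
  set B : Set ℂ := ball x₀ r with hBdef
  have hvolB : volume B = ENNReal.ofReal (r ^ 2) * Bvol := by
    rw [hBdef, volume.addHaar_ball x₀ hr0.le, Complex.finrank_real_complex, hBvoldef]
  set c : ℂ → ℂ → ℝ≥0∞ := fun x z => ENNReal.ofReal (‖z - x‖ ^ (-q)) with hcdef
  have hcm : Measurable (Function.uncurry c) := by
    apply Measurable.ennreal_ofReal; fun_prop
  have hcmx : ∀ x : ℂ, Measurable (fun z => c x z) := by
    intro x; apply Measurable.ennreal_ofReal; fun_prop
  set ind : ℂ → ℝ≥0∞ := Set.indicator {z | (j:ℝ≥0∞) < g z} g with hinddef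
  have hindm : Measurable ind := hgm.indicator (measurableSet_lt measurable_const hgm)
  have hindfin : ∀ z, ind z ≠ ∞ := fun z =>
    ne_top_of_le_ne_top ENNReal.ofReal_ne_top (Set.indicator_le_self _ _ z)
  -- pointwise bound on Φ
  have hΦle : ∀ x ∈ B, ∀ z : ℂ,
      Φ x z ≤ ENNReal.ofReal (r ^ q) * (g z * c x z) := by
    intro x hx z
    by_cases hzx : z = x
    · simp only [hΦdef]
      rw [hzx, sub_self, norm_zero, Real.zero_rpow hq0.ne', div_zero, ENNReal.ofReal_zero]
      exact zero_le
    · have hzx0 : (0:ℝ) < ‖z - x‖ := by rw [norm_pos_iff]; exact sub_ne_zero.2 hzx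
      have hxr : ‖x - x₀‖ < r := by rw [← dist_eq_norm]; exact mem_ball.1 hx
      have hA : ‖x - x₀‖ ^ q ≤ r ^ q :=
        Real.rpow_le_rpow (norm_nonneg _) hxr.le hq0.le
      have hdiv : ‖x - x₀‖ ^ q * ‖k' z‖ ^ q / ‖z - x‖ ^ q
          = ‖x - x₀‖ ^ q * (‖k' z‖ ^ q * ‖z - x‖ ^ (-q)) := by
        rw [Real.rpow_neg (norm_nonneg _), div_eq_mul_inv, mul_assoc]
      calc Φ x z = ENNReal.ofReal (‖x - x₀‖ ^ q * (‖k' z‖ ^ q * ‖z - x‖ ^ (-q))) := by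
            simp only [hΦdef]; rw [hdiv]
        _ ≤ ENNReal.ofReal (r ^ q * (‖k' z‖ ^ q * ‖z - x‖ ^ (-q))) :=
            ENNReal.ofReal_le_ofReal
              (mul_le_mul_of_nonneg_right hA (by positivity))
        _ = ENNReal.ofReal (r ^ q) * (g z * c x z) := by
            rw [ENNReal.ofReal_mul (by positivity), ENNReal.ofReal_mul (by positivity)]
  -- the inner splitting
  have hsplit : ∀ x : ℂ, (∫⁻ z in X, g z * c x z)
      ≤ (∫⁻ z in X, min (g z) j * c x z) + ∫⁻ z in X, ind z * c x z := by
    intro x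
    have hpt : ∀ z, g z * c x z ≤ min (g z) j * c x z + ind z * c x z := by
      intro z
      rw [← add_mul]
      apply mul_le_mul_left
      by_cases hz : (j:ℝ≥0∞) < g z
      · have hzmem : z ∈ {z : ℂ | (j:ℝ≥0∞) < g z} := hz
        have hiz : ind z = g z := by
          rw [hinddef]; exact Set.indicator_of_mem hzmem g
        rw [hiz]; exact le_add_self
      · have hzmem : z ∉ {z : ℂ | (j:ℝ≥0∞) < g z} := hz
        have hiz : ind z = 0 := by
          rw [hinddef]; exact Set.indicator_of_notMem hzmem g
        rw [hiz, add_zero]; exact le_min le_rfl (not_lt.1 hz)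
    calc (∫⁻ z in X, g z * c x z)
        ≤ ∫⁻ z in X, (min (g z) j * c x z + ind z * c x z) := lintegral_mono hpt
      _ = _ := lintegral_add_left ((hgm.min measurable_const).mul (hcmx x)) _
  -- bounded part
  have hS1 : ∀ x ∈ B, (∫⁻ z in X, min (g z) j * c x z) ≤ (j:ℝ≥0∞) * C₁ := by
    intro x hx
    have hxB1 : x ∈ ball x₀ 1 := mem_ball.2 (lt_of_lt_of_le (mem_ball.1 hx) hr1)
    calc (∫⁻ z in X, min (g z) j * c x z)
        ≤ ∫⁻ z in X, (j:ℝ≥0∞) * c x z :=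
          lintegral_mono fun z => mul_le_mul_left (min_le_right _ _) _
      _ = (j:ℝ≥0∞) * ∫⁻ z in X, c x z :=
          lintegral_const_mul' _ _ (ENNReal.natCast_ne_top j)
      _ ≤ (j:ℝ≥0∞) * C₁ := mul_le_mul_right (hE1 x hxB1) _
  -- the J bound
  set K : ℝ≥0∞ := ENNReal.ofReal ((2*r) ^ (2 - q)) * C₀
      + ENNReal.ofReal (r ^ (-q)) * volume B with hKdef
  have hJ : ∀ z : ℂ, (∫⁻ x in B, c x z) ≤ K := by
    intro z
    have hpt : ∀ x : ℂ,
        c x z ≤ (ball z (2*r)).indicator (fun x => c x z) x + ENNReal.ofReal (r ^ (-q)) := by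
      intro x
      by_cases hxz : x ∈ ball z (2*r)
      · rw [Set.indicator_of_mem hxz]; exact le_self_add
      · rw [Set.indicator_of_notMem hxz, zero_add]
        apply ENNReal.ofReal_le_ofReal
        apply Real.rpow_le_rpow_of_nonpos hr0 ?_ (neg_nonpos.2 hq0.le)
        have h2r : 2*r ≤ dist x z := not_lt.1 fun h => hxz (mem_ball.2 h)
        rw [← dist_eq_norm]
        calc r ≤ 2*r := by linarith
          _ ≤ dist z x := by rw [dist_comm]; exact h2r
    calc (∫⁻ x in B, c x z)
        ≤ ∫⁻ x in B, ((ball z (2*r)).indicator (fun x => c x z) x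
            + ENNReal.ofReal (r ^ (-q))) := lintegral_mono hpt
      _ = (∫⁻ x in B, (ball z (2*r)).indicator (fun x => c x z) x)
            + ENNReal.ofReal (r ^ (-q)) * volume B := by
          rw [lintegral_add_right _ measurable_const, setLIntegral_const]
      _ ≤ (∫⁻ x in ball z (2*r), c x z) + ENNReal.ofReal (r ^ (-q)) * volume B := by
          apply add_le_add_left
          rw [lintegral_indicator measurableSet_ball, Measure.restrict_restrict
            measurableSet_ball]
          exact lintegral_mono_set inter_subset_left
      _ = (∫⁻ w in ball (0:ℂ) (2*r), ENNReal.ofReal (‖w‖ ^ (-q)))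
            + ENNReal.ofReal (r ^ (-q)) * volume B := by
          congr 1
          have hcg : ∀ x : ℂ, c x z
              = (fun w => ENNReal.ofReal (‖w‖ ^ (-q))) (x - z) := by
            intro x; simp only [hcdef]; rw [norm_sub_rev]
          rw [lintegral_congr hcg]
          exact AvgDblAux.lint_translate_ball (fun w => ENNReal.ofReal (‖w‖ ^ (-q))) z (2*r)
      _ ≤ K := by
          rw [hKdef, AvgDblAux.lint_ball_scale hq0 (by positivity : (0:ℝ) < 2*r)]
  -- assemble the tail part with Tonelli
  have hswapmeas : AEMeasurable (Function.uncurry fun x z => ind z * c x z)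
      ((volume.restrict B).prod (volume.restrict X)) := by
    exact ((hindm.comp measurable_snd).mul hcm).aemeasurable
  have htail : (∫⁻ x in B, ∫⁻ z in X, ind z * c x z) ≤ K * t j := by
    rw [lintegral_lintegral_swap hswapmeas]
    calc (∫⁻ z in X, ∫⁻ x in B, ind z * c x z)
        = ∫⁻ z in X, ind z * ∫⁻ x in B, c x z :=
          lintegral_congr fun z => lintegral_const_mul' _ _ (hindfin z)
      _ ≤ ∫⁻ z in X, ind z * K :=
          lintegral_mono fun z => mul_le_mul_right (hJ z) _
      _ = t j * K := lintegral_mul_const _ hindm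
      _ = K * t j := mul_comm _ _
  -- master bound
  set W : ℝ≥0∞ := ENNReal.ofReal (r ^ q) * ((j:ℝ≥0∞) * C₁) * Bvol + D * t j with hWdef
  have hWfin : W ≠ ∞ := by
    rw [hWdef]
    exact ENNReal.add_ne_top.2
      ⟨ENNReal.mul_ne_top (ENNReal.mul_ne_top ENNReal.ofReal_ne_top
          (ENNReal.mul_ne_top (ENNReal.natCast_ne_top j) hC₁)) hBtop,
        ENNReal.mul_ne_top hD (htfin j)⟩
  have hmeas1 : Measurable fun x => ∫⁻ z in X, min (g z) j * c x z := by
    have hu : Measurable fun p : ℂ × ℂ => min (g p.2) (j:ℝ≥0∞) * c p.1 p.2 :=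
      ((hgm.comp measurable_snd).min measurable_const).mul hcm
    exact hu.lintegral_prod_right'
  have hofq : ENNReal.ofReal (r ^ q) * ENNReal.ofReal ((2*r) ^ (2 - q))
      = ENNReal.ofReal (r ^ 2) * ENNReal.ofReal (2 ^ (2 - q)) := by
    rw [← ENNReal.ofReal_mul (by positivity), ← ENNReal.ofReal_mul (by positivity)]
    congr 1
    rw [Real.mul_rpow (by norm_num) hr0.le,
      show r ^ q * (2 ^ (2-q) * r ^ (2-q)) = r ^ q * r ^ (2-q) * 2 ^ (2-q) by ring,
      ← Real.rpow_add hr0, show q + (2 - q) = 2 by ring, Real.rpow_two]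
  have hof1 : ENNReal.ofReal (r ^ q) * ENNReal.ofReal (r ^ (-q)) = 1 := by
    rw [← ENNReal.ofReal_mul (by positivity), ← Real.rpow_add hr0, add_neg_cancel,
      Real.rpow_zero, ENNReal.ofReal_one]
  have hIW : (∫⁻ x in B, L x) ≤ ENNReal.ofReal (r ^ 2) * W := by
    calc (∫⁻ x in B, L x)
        ≤ ∫⁻ x in B, ENNReal.ofReal (r ^ q) * ∫⁻ z in X, g z * c x z := by
          refine setLIntegral_mono' measurableSet_ball fun x hx => ?_
          calc L x ≤ ∫⁻ z in X, ENNReal.ofReal (r ^ q) * (g z * c x z) :=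
              lintegral_mono fun z => hΦle x hx z
            _ = _ := lintegral_const_mul' _ _ ENNReal.ofReal_ne_top
      _ = ENNReal.ofReal (r ^ q) * ∫⁻ x in B, ∫⁻ z in X, g z * c x z :=
          lintegral_const_mul' _ _ ENNReal.ofReal_ne_top
      _ ≤ ENNReal.ofReal (r ^ q) * ((∫⁻ x in B, ∫⁻ z in X, min (g z) j * c x z)
            + ∫⁻ x in B, ∫⁻ z in X, ind z * c x z) := by
          refine mul_le_mul_right ?_ _
          calc (∫⁻ x in B, ∫⁻ z in X, g z * c x z)
              ≤ ∫⁻ x in B, ((∫⁻ z in X, min (g z) j * c x z)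
                  + ∫⁻ z in X, ind z * c x z) := lintegral_mono fun x => hsplit x
            _ = _ := lintegral_add_left hmeas1 _
      _ ≤ ENNReal.ofReal (r ^ q) * ((j:ℝ≥0∞) * C₁ * volume B + K * t j) := by
          refine mul_le_mul_right (add_le_add ?_ htail) _
          calc (∫⁻ x in B, ∫⁻ z in X, min (g z) j * c x z)
              ≤ ∫⁻ _x in B, (j:ℝ≥0∞) * C₁ := setLIntegral_mono' measurableSet_ball hS1
            _ = (j:ℝ≥0∞) * C₁ * volume B := setLIntegral_const _ _
      _ = ENNReal.ofReal (r ^ 2) * W := by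
          rw [hKdef, hWdef, hDdef, hvolB]
          calc ENNReal.ofReal (r ^ q) * ((j:ℝ≥0∞) * C₁ * (ENNReal.ofReal (r ^ 2) * Bvol)
                + (ENNReal.ofReal ((2*r) ^ (2 - q)) * C₀
                  + ENNReal.ofReal (r ^ (-q)) * (ENNReal.ofReal (r ^ 2) * Bvol)) * t j)
              = (ENNReal.ofReal (r ^ q) * ENNReal.ofReal ((2*r) ^ (2 - q))) * (C₀ * t j)
                + (ENNReal.ofReal (r ^ q) * ENNReal.ofReal (r ^ (-q)))
                  * (ENNReal.ofReal (r ^ 2) * (Bvol * t j))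
                + ENNReal.ofReal (r ^ 2)
                  * (ENNReal.ofReal (r ^ q) * ((j:ℝ≥0∞) * C₁) * Bvol) := by ring
            _ = ENNReal.ofReal (r ^ 2)
                * (ENNReal.ofReal (r ^ q) * ((j:ℝ≥0∞) * C₁) * Bvol
                  + (ENNReal.ofReal (2 ^ (2 - q)) * C₀ + Bvol) * t j) := by
                rw [hofq, hof1]; ring
  have hIfin : (∫⁻ x in B, L x) ≠ ∞ :=
    (hIW.trans_lt (ENNReal.mul_lt_top ENNReal.ofReal_lt_top hWfin.lt_top)).ne
  -- pass to real integrals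
  have hnn : 0 ≤ (volume B).toReal⁻¹ * ∫ x in B, (L x).toReal :=
    mul_nonneg (inv_nonneg.2 ENNReal.toReal_nonneg)
      (integral_nonneg fun x => ENNReal.toReal_nonneg)
  rw [Real.dist_0_eq_abs, abs_of_nonneg hnn]
  have hupper : (∫ x in B, (L x).toReal) ≤ (∫⁻ x in B, L x).toReal := by
    rw [integral_eq_lintegral_of_nonneg_ae
      (Eventually.of_forall fun x => ENNReal.toReal_nonneg)
      (hLm.ennreal_toReal.aestronglyMeasurable)]
    exact ENNReal.toReal_mono hIfin (lintegral_mono fun x => ENNReal.ofReal_toReal_le)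
  have hWlt : W < ENNReal.ofReal ε * Bvol := by
    have h1 : ENNReal.ofReal (r ^ q) * ((j:ℝ≥0∞) * C₁) * Bvol
        < ENNReal.ofReal (ε/2) * Bvol :=
      ENNReal.mul_lt_mul_left hB0 hBtop (hN n hnN)
    calc W < ENNReal.ofReal (ε/2) * Bvol + ENNReal.ofReal (ε/2) * Bvol :=
        ENNReal.add_lt_add h1 hj
      _ = ENNReal.ofReal ε * Bvol := by
        rw [← add_mul, ← ENNReal.ofReal_add (by positivity) (by positivity), add_halves]
  have hWR : W.toReal < ε * Bvol.toReal := by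
    have h := (ENNReal.toReal_lt_toReal hWfin
      (ENNReal.mul_ne_top ENNReal.ofReal_ne_top hBtop)).2 hWlt
    rwa [ENNReal.toReal_mul, ENNReal.toReal_ofReal hε.le] at h
  calc (volume B).toReal⁻¹ * ∫ x in B, (L x).toReal
      ≤ (volume B).toReal⁻¹ * (∫⁻ x in B, L x).toReal :=
        mul_le_mul_of_nonneg_left hupper (inv_nonneg.2 ENNReal.toReal_nonneg)
    _ ≤ (volume B).toReal⁻¹ * (ENNReal.ofReal (r ^ 2) * W).toReal :=
        mul_le_mul_of_nonneg_left
          (ENNReal.toReal_mono (ENNReal.mul_ne_top ENNReal.ofReal_ne_top hWfin) hIW)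
          (inv_nonneg.2 ENNReal.toReal_nonneg)
    _ = Bvol.toReal⁻¹ * W.toReal := by
        rw [hvolB, ENNReal.toReal_mul, ENNReal.toReal_mul,
          ENNReal.toReal_ofReal (by positivity)]
        have hr2 : r ^ 2 ≠ 0 := by positivity
        field_simp
    _ < Bvol.toReal⁻¹ * (ε * Bvol.toReal) :=
        mul_lt_mul_of_pos_left hWR (inv_pos.2 hBtR)
    _ = ε := by field_simp
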